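/- Let F : ℝⁿ → ℝⁿ be a polynomial map with F(0) = 0 and j(F)(0) ≠ 0, and let G be its Segre extension. Then for every y ∈ ℝⁿ and t ≠ 0 the fiber G⁻¹({(y,t)}) is in bijection with the fiber F⁻¹({t • y}), and for every y ∈ ℝⁿ the fiber G⁻¹({(y,0)}) has exactly one element. Consequently, if every fiber of F is finite, then the supremum over all points of the cardinalities of the fibers of G equals the supremum over all points of the cardinalities of the fibers of F. -/

import Mathlib

noncomputable section

/-- A map between real coordinate spaces is a polynomial map if each component is
given by evaluation of a real polynomial. -/
def IsPolynomialMap {ι κ : Type*} (F : (ι → ℝ) → (κ → ℝ)) : Prop :=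
  ∃ p : κ → MvPolynomial ι ℝ, ∀ x i, F x i = MvPolynomial.eval x (p i)

/-- The Jacobian determinant j(F)(p) = det J(F)(p) of a map at a point. -/
def jdet {E : Type*} [NormedAddCommGroup E] [NormedSpace ℝ E] (F : E → E) (p : E) : ℝ :=
  LinearMap.det (fderiv ℝ F p : E →ₗ[ℝ] E)

lemma mv_diff {σ : Type*} [Fintype σ] (p : MvPolynomial σ ℝ) :
    Differentiable ℝ (fun x : σ → ℝ => MvPolynomial.eval x p) := by
  intro z
  have h : AnalyticAt ℝ (fun x : σ → ℝ => (MvPolynomial.aeval x) p) z :=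
    AnalyticAt.aeval_mvPolynomial
      (fun i => ((ContinuousLinearMap.proj i : (σ → ℝ) →L[ℝ] ℝ).analyticAt z)) p
  have he : ∀ x : σ → ℝ, (MvPolynomial.aeval x) p = MvPolynomial.eval x p := by
    intro x; rw [← MvPolynomial.coe_aeval_eq_eval]; rfl
  simpa [he] using h.differentiableAt

lemma polymap_diff {ι κ : Type*} [Fintype ι] [Fintype κ] {F : (ι → ℝ) → (κ → ℝ)}
    (hF : IsPolynomialMap F) : Differentiable ℝ F := by
  obtain ⟨p, hp⟩ := hF
  have : F = fun x i => MvPolynomial.eval x (p i) := by funext x i; exact hp x i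
  rw [this]
  exact differentiable_pi.2 fun i => mv_diff (p i)

lemma segre_zero {n : ℕ} {F : (Fin n → ℝ) → (Fin n → ℝ)}
    {G₁ : (Fin (n + 1) → ℝ) → (Fin n → ℝ)}
    (hFd : Differentiable ℝ F) (hG₁d : Differentiable ℝ G₁)
    (hG₁F : ∀ v : Fin (n + 1) → ℝ,
      v (Fin.last n) • G₁ v = F (v (Fin.last n) • (v ∘ Fin.castSucc)))
    (x : Fin n → ℝ) :
    G₁ (Fin.snoc x 0) = fderiv ℝ F 0 x := by
  classical
  set c : ℝ → (Fin (n + 1) → ℝ) := fun t => Fin.snoc x t with hc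
  have hceq : ∀ t, c t = (Fin.snoc x 0 : Fin (n+1) → ℝ) + t • (Fin.snoc 0 1 : Fin (n+1) → ℝ) := by
    intro t
    funext i
    refine Fin.lastCases ?_ (fun j => ?_) i <;> simp [hc]
  have hcd : HasDerivAt c ((Fin.snoc 0 1 : Fin (n+1) → ℝ)) 0 := by
    have : HasDerivAt (fun t : ℝ => (Fin.snoc x 0 : Fin (n+1) → ℝ) + t • (Fin.snoc 0 1 : Fin (n+1) → ℝ))
        ((1:ℝ) • (Fin.snoc 0 1 : Fin (n+1) → ℝ)) 0 :=
      ((hasDerivAt_id (0:ℝ)).smul_const _).const_add _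
    simpa [funext hceq] using this
  have hgd : HasDerivAt (fun t => G₁ (c t))
      (fderiv ℝ G₁ (c 0) ((Fin.snoc 0 1 : Fin (n+1) → ℝ))) 0 :=
    (hG₁d (c 0)).hasFDerivAt.comp_hasDerivAt 0 hcd
  have h1 : HasDerivAt (fun t : ℝ => t • G₁ (c t)) (G₁ (c 0)) 0 := by
    have := (hasDerivAt_id (0:ℝ)).smul hgd
    rw [show id (0:ℝ) • (fderiv ℝ G₁ (c 0)) (Fin.snoc 0 1) + (1:ℝ) • G₁ (c 0) = G₁ (c 0) by simp] at this
    exact this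
  have hmd : HasDerivAt (fun t : ℝ => t • x) x 0 := by
    simpa using (hasDerivAt_id (0:ℝ)).smul_const x
  have h2 : HasDerivAt (fun t : ℝ => F (t • x)) (fderiv ℝ F 0 x) 0 := by
    have hf0 : HasFDerivAt F (fderiv ℝ F 0) ((0:ℝ) • x) := by
      simpa using (hFd 0).hasFDerivAt
    exact hf0.comp_hasDerivAt (0:ℝ) hmd
  have heq : (fun t : ℝ => t • G₁ (c t)) = fun t : ℝ => F (t • x) := by
    funext t
    have := hG₁F (c t)
    simpa [hc] using this
  rw [heq] at h1
  have h0 : c 0 = (Fin.snoc x 0 : Fin (n+1) → ℝ) := rfl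
  rw [← h0]
  exact h1.unique h2

/-- let F : ℝⁿ → ℝⁿ be a polynomial map with F(0) = 0 and j(F)(0) ≠ 0,
and let G be its Segre extension. For t ≠ 0 the fiber of G over (y,t) is in
bijection with the fiber of F over t • y, and the fiber of G over (y,0) is a
singleton. Hence if all fibers of F are finite, the supremum of the fiber
cardinalities of G equals that of F.
(ℝⁿ × ℝ is modelled as Fin (n+1) → ℝ via Fin.snoc.) -/
theorem stmt7 (n : ℕ) (F : (Fin n → ℝ) → (Fin n → ℝ))
    (hF : IsPolynomialMap F) (h0 : F 0 = 0) (hj0 : jdet F 0 ≠ 0)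
    (G₁ : (Fin (n + 1) → ℝ) → (Fin n → ℝ)) (hG₁ : IsPolynomialMap G₁)
    (hG₁F : ∀ v : Fin (n + 1) → ℝ,
      v (Fin.last n) • G₁ v = F (v (Fin.last n) • (v ∘ Fin.castSucc)))
    (G : (Fin (n + 1) → ℝ) → (Fin (n + 1) → ℝ))
    (hG : ∀ v, G v = Fin.snoc (G₁ v) (v (Fin.last n))) :
    (∀ (y : Fin n → ℝ) (t : ℝ), t ≠ 0 →
      Nonempty ((G ⁻¹' {Fin.snoc y t}) ≃ (F ⁻¹' {t • y}))) ∧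
    (∀ y : Fin n → ℝ, ∃! v, G v = Fin.snoc y 0) ∧
    ((∀ y, (F ⁻¹' {y}).Finite) →
      (⨆ w : Fin (n + 1) → ℝ, Nat.card (G ⁻¹' {w})) =
        ⨆ y : Fin n → ℝ, Nat.card (F ⁻¹' {y})) := by
  classical
  have hFd : Differentiable ℝ F := polymap_diff hF
  have hG₁d : Differentiable ℝ G₁ := polymap_diff hG₁
  have hz : ∀ x, G₁ (Fin.snoc x 0) = fderiv ℝ F 0 x := segre_zero hFd hG₁d hG₁F
  have hmem : ∀ (v) (y : Fin n → ℝ) (t : ℝ), G v = Fin.snoc y t ↔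
      (G₁ v = y ∧ v (Fin.last n) = t) := by
    intro v y t
    rw [hG v]
    constructor
    · intro h
      constructor
      · funext i
        have := congrFun h (Fin.castSucc i)
        simpa using this
      · have := congrFun h (Fin.last n)
        simpa using this
    · rintro ⟨h1, h2⟩; rw [h1, h2]
  -- Part 1
  have part1 : ∀ (y : Fin n → ℝ) (t : ℝ), t ≠ 0 →
      Nonempty ((G ⁻¹' {Fin.snoc y t}) ≃ (F ⁻¹' {t • y})) := by
    intro y t ht
    have hto : ∀ v : (Fin (n+1) → ℝ), G v = Fin.snoc y t →
        F (t • (v ∘ Fin.castSucc)) = t • y := by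
      intro v hv
      obtain ⟨h1, h2⟩ := (hmem v y t).1 hv
      have h := hG₁F v
      rw [h2, h1] at h
      exact h.symm
    have hinv : ∀ z : (Fin n → ℝ), F z = t • y →
        G (Fin.snoc (t⁻¹ • z) t) = Fin.snoc y t := by
      intro z hzz
      set v : Fin (n+1) → ℝ := Fin.snoc (t⁻¹ • z) t with hvdef
      have hv1 : v (Fin.last n) = t := by simp [hvdef]
      have hv2 : v ∘ Fin.castSucc = t⁻¹ • z := by
        funext i; simp [hvdef]
      have h := hG₁F v
      rw [hv1, hv2, smul_inv_smul₀ ht, hzz] at h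
      have hy : G₁ v = y := smul_right_injective _ ht h
      exact (hmem v y t).2 ⟨hy, hv1⟩
    refine ⟨{
      toFun := fun v => ⟨t • (v.1 ∘ Fin.castSucc), by
        simp only [Set.mem_preimage, Set.mem_singleton_iff]
        exact hto v.1 v.2⟩
      invFun := fun z => ⟨Fin.snoc (t⁻¹ • z.1) t, by
        simp only [Set.mem_preimage, Set.mem_singleton_iff]
        exact hinv z.1 z.2⟩
      left_inv := by
        rintro ⟨v, hv⟩
        apply Subtype.ext
        have h2 : v (Fin.last n) = t := ((hmem v y t).1 hv).2
        show Fin.snoc (t⁻¹ • (t • (v ∘ Fin.castSucc))) t = v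
        rw [inv_smul_smul₀ ht, ← h2]
        exact Fin.snoc_init_self v
      right_inv := by
        rintro ⟨z, hzz⟩
        apply Subtype.ext
        show t • ((Fin.snoc (t⁻¹ • z) t : Fin (n+1) → ℝ) ∘ Fin.castSucc) = z
        have : (Fin.snoc (t⁻¹ • z) t : Fin (n+1) → ℝ) ∘ Fin.castSucc = t⁻¹ • z := by
          funext i; simp
        rw [this, smul_inv_smul₀ ht] }⟩
  -- Part 2
  have hLdet : LinearMap.det (fderiv ℝ F 0 : (Fin n → ℝ) →ₗ[ℝ] (Fin n → ℝ)) ≠ 0 := hj0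
  let e := LinearMap.equivOfDetNeZero _ hLdet
  have he : ∀ x, e x = fderiv ℝ F 0 x := fun x => rfl
  have part2 : ∀ y : Fin n → ℝ, ∃! v, G v = Fin.snoc y 0 := by
    intro y
    refine ⟨Fin.snoc (e.symm y) 0, ?_, ?_⟩
    · refine (hmem _ _ _).2 ⟨?_, by simp⟩
      rw [hz (e.symm y), ← he]
      exact e.apply_symm_apply y
    · intro v hv
      obtain ⟨h1, h2⟩ := (hmem v y 0).1 hv
      have hv' : v = Fin.snoc (Fin.init v) (0:ℝ) := by
        rw [← h2]; exact (Fin.snoc_init_self v).symm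
      have hx : e (Fin.init v) = y := by
        rw [he, ← hz, ← hv', h1]
      have : Fin.init v = e.symm y := by
        rw [← hx, e.symm_apply_apply]
      rw [hv', this]
  refine ⟨part1, part2, ?_⟩
  -- Part 3
  intro hfin
  set f : (Fin n → ℝ) → ℕ := fun y => Nat.card (F ⁻¹' {y}) with hf
  set g : (Fin (n+1) → ℝ) → ℕ := fun w => Nat.card (G ⁻¹' {w}) with hg'
  have hgval : ∀ w : Fin (n+1) → ℝ, w (Fin.last n) ≠ 0 →
      g w = f (w (Fin.last n) • (Fin.init w)) := by
    intro w hw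
    have hw' : w = Fin.snoc (Fin.init w) (w (Fin.last n)) := (Fin.snoc_init_self w).symm
    obtain ⟨eqv⟩ := part1 (Fin.init w) (w (Fin.last n)) hw
    calc g w = Nat.card (G ⁻¹' {Fin.snoc (Fin.init w) (w (Fin.last n))}) := by
          rw [hg']; rw [← hw']
      _ = _ := Nat.card_congr eqv
  have hgzero : ∀ w : Fin (n+1) → ℝ, w (Fin.last n) = 0 → g w = 1 := by
    intro w hw
    have hw' : w = Fin.snoc (Fin.init w) (0:ℝ) := by
      rw [← hw]; exact (Fin.snoc_init_self w).symm
    obtain ⟨v₀, hv₀, hun⟩ := part2 (Fin.init w)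
    have hset : G ⁻¹' {w} = {v₀} := by
      ext v
      simp only [Set.mem_preimage, Set.mem_singleton_iff]
      constructor
      · intro h; exact hun v (by rw [← hw']; exact h)
      · intro h; rw [h, hv₀, ← hw']
    show Nat.card (G ⁻¹' {w}) = 1
    rw [hset]
    simp
  have hgf : ∀ y, f y = g (Fin.snoc y 1) := by
    intro y
    have h := hgval (Fin.snoc y 1) (by simp)
    rw [h]
    congr 1
    have h1 : (Fin.snoc y 1 : Fin (n+1) → ℝ) (Fin.last n) = 1 := by simp
    have h2 : Fin.init (Fin.snoc y 1 : Fin (n+1) → ℝ) = y := Fin.init_snoc _ _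
    rw [h1, h2, one_smul]
  have hf0 : 1 ≤ f 0 := by
    haveI : Finite (F ⁻¹' {(0 : Fin n → ℝ)}) := (hfin 0).to_subtype
    haveI : Nonempty (F ⁻¹' {(0 : Fin n → ℝ)}) := ⟨⟨0, by simp [h0]⟩⟩
    exact Nat.card_pos
  by_cases hb : BddAbove (Set.range f)
  · apply le_antisymm
    · apply ciSup_le
      intro w
      by_cases hw : w (Fin.last n) = 0
      · rw [hgzero w hw]
        calc 1 ≤ f 0 := hf0
          _ ≤ ⨆ y, f y := le_ciSup hb 0
      · rw [hgval w hw]; exact le_ciSup hb _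
    · apply ciSup_le
      intro y
      rw [hgf y]
      refine le_ciSup ?_ ((Fin.snoc y 1 : Fin (n+1) → ℝ))
      obtain ⟨M, hM⟩ := hb
      refine ⟨max M 1, ?_⟩
      rintro m ⟨w, rfl⟩
      by_cases hw : w (Fin.last n) = 0
      · rw [hgzero w hw]; exact le_max_right _ _
      · rw [hgval w hw]; exact le_trans (hM (Set.mem_range_self _)) (le_max_left _ _)
  · have hbg : ¬ BddAbove (Set.range g) := by
      rintro ⟨M, hM⟩
      apply hb
      refine ⟨M, ?_⟩
      rintro m ⟨y, rfl⟩
      rw [hgf y]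
      exact hM (Set.mem_range_self _)
    rw [iSup, iSup, csSup_of_not_bddAbove hbg, csSup_of_not_bddAbove hb]
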